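/- (Key step of Proposition 3) Let n ≥ 1 and let V be any finite set of pairwise distinct elements of SA(n), with |V| = m, and let M_V be the m × 2^n real matrix whose rows are the transposes of the elements of V. Then the kernel of the linear map x ↦ M_V x on ℝ^(2^n) equals the linear span of SA(n) \ V, and has dimension 2^n − m. -/

import Mathlib

noncomputable def Smat (k : ℕ) : Matrix (Fin (2 ^ (k + 1))) (Fin (2 ^ k)) ℝ :=
  Matrix.of fun i j =>
    if (i : ℕ) < 2 ^ k then (if (i : ℕ) = (j : ℕ) then 1 else 0)
    else (if (i : ℕ) + (j : ℕ) = 2 ^ (k + 1) - 1 then 1 else 0)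

noncomputable def Amat (k : ℕ) : Matrix (Fin (2 ^ (k + 1))) (Fin (2 ^ k)) ℝ :=
  Matrix.of fun i j =>
    if (i : ℕ) < 2 ^ k then (if (i : ℕ) = (j : ℕ) then -1 else 0)
    else (if (i : ℕ) + (j : ℕ) = 2 ^ (k + 1) - 1 then 1 else 0)

noncomputable def Fmat (b : Bool) (k : ℕ) : Matrix (Fin (2 ^ (k + 1))) (Fin (2 ^ k)) ℝ :=
  if b then Amat k else Smat k

noncomputable def prodVec : (n : ℕ) → (Fin n → Bool) → (Fin (2 ^ n) → ℝ)
  | 0, _ => fun _ => 1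
  | n + 1, c => (Fmat (c (Fin.last n)) n).mulVec (prodVec n fun i => c i.castSucc)

def SA (n : ℕ) : Set (Fin (2 ^ n) → ℝ) := { v | ∃ c : Fin n → Bool, v = prodVec n c }

def sgn (b : Bool) : ℝ := if b then -1 else 1

lemma Fmat_apply (b : Bool) (k : ℕ) (i : Fin (2 ^ (k+1))) (j : Fin (2 ^ k)) :
    Fmat b k i j = if (i : ℕ) < 2 ^ k then (if (i : ℕ) = (j : ℕ) then sgn b else 0)
      else (if (i : ℕ) + (j : ℕ) = 2 ^ (k + 1) - 1 then 1 else 0) := by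
  cases b <;> simp [Fmat, Smat, Amat, sgn]

lemma mulVec_lo (b : Bool) (k : ℕ) (u : Fin (2 ^ k) → ℝ) (i : Fin (2 ^ (k+1)))
    (h : (i : ℕ) < 2 ^ k) :
    (Fmat b k).mulVec u i = sgn b * u ⟨i, h⟩ := by
  unfold Matrix.mulVec dotProduct
  rw [Finset.sum_eq_single (⟨(i : ℕ), h⟩ : Fin (2 ^ k))]
  · simp [Fmat_apply, h]
  · intro j _ hj
    beta_reduce
    rw [Fmat_apply]
    simp only [h, if_true]
    rw [if_neg, zero_mul]
    intro hij
    exact hj (by ext; simp [← hij])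
  · simp

lemma mulVec_hi (b : Bool) (k : ℕ) (u : Fin (2 ^ k) → ℝ) (i : Fin (2 ^ (k+1)))
    (h : ¬ (i : ℕ) < 2 ^ k) :
    (Fmat b k).mulVec u i
      = u ⟨2 ^ (k+1) - 1 - (i : ℕ), by
          have h2 : (i : ℕ) < 2 ^ (k+1) := i.isLt
          have : 2 ^ (k+1) = 2 ^ k + 2 ^ k := by ring
          omega⟩ := by
  have h2 : (i : ℕ) < 2 ^ (k+1) := i.isLt
  have hp : 2 ^ (k+1) = 2 ^ k + 2 ^ k := by ring
  unfold Matrix.mulVec dotProduct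
  rw [Finset.sum_eq_single (⟨2 ^ (k+1) - 1 - (i : ℕ), by omega⟩ : Fin (2 ^ k))]
  · simp only []
    rw [Fmat_apply]
    simp only [h, if_false]
    rw [if_pos (by omega), one_mul]
  · intro j _ hj
    beta_reduce
    rw [Fmat_apply]
    simp only [h, if_false]
    rw [if_neg, zero_mul]
    intro hij
    exact hj (by ext; simp; omega)
  · simp

lemma dot_step (b b' : Bool) (k : ℕ) (u w : Fin (2 ^ k) → ℝ) :
    dotProduct ((Fmat b k).mulVec u) ((Fmat b' k).mulVec w)
      = (sgn b * sgn b' + 1) * dotProduct u w := by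
  have hp : 2 ^ (k+1) = 2 ^ k + 2 ^ k := by ring
  unfold dotProduct
  rw [← Equiv.sum_comp ((finSumFinEquiv (m := 2 ^ k) (n := 2 ^ k)).trans (finCongr hp.symm))
      (fun i => (Fmat b k).mulVec u i * (Fmat b' k).mulVec w i), Fintype.sum_sum_type]
  have hlo : ∀ j : Fin (2 ^ k),
      (Fmat b k).mulVec u (((finSumFinEquiv).trans (finCongr hp.symm)) (Sum.inl j)) *
      (Fmat b' k).mulVec w (((finSumFinEquiv).trans (finCongr hp.symm)) (Sum.inl j))
      = (sgn b * sgn b') * (u j * w j) := by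
    intro j
    have hj : ((((finSumFinEquiv).trans (finCongr hp.symm)) (Sum.inl j) : Fin (2 ^ (k+1))) : ℕ)
        = (j : ℕ) := by simp
    have hlt : ((((finSumFinEquiv).trans (finCongr hp.symm)) (Sum.inl j) : Fin (2 ^ (k+1))) : ℕ)
        < 2 ^ k := by rw [hj]; exact j.isLt
    rw [mulVec_lo b k u _ hlt, mulVec_lo b' k w _ hlt]
    have : (⟨_, hlt⟩ : Fin (2 ^ k)) = j := by ext; simp [hj]
    rw [this]; ring
  have hhi : ∀ j : Fin (2 ^ k),
      (Fmat b k).mulVec u (((finSumFinEquiv).trans (finCongr hp.symm)) (Sum.inr j)) *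
      (Fmat b' k).mulVec w (((finSumFinEquiv).trans (finCongr hp.symm)) (Sum.inr j))
      = u j.rev * w j.rev := by
    intro j
    have hj : ((((finSumFinEquiv).trans (finCongr hp.symm)) (Sum.inr j) : Fin (2 ^ (k+1))) : ℕ)
        = 2 ^ k + (j : ℕ) := by simp; omega
    have hlt : ¬ ((((finSumFinEquiv).trans (finCongr hp.symm)) (Sum.inr j) : Fin (2 ^ (k+1))) : ℕ)
        < 2 ^ k := by omega
    rw [mulVec_hi b k u _ hlt, mulVec_hi b' k w _ hlt]
    have hje : (j : ℕ) < 2 ^ k := j.isLt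
    congr 1 <;> (congr 1; ext; simp only [Fin.val_rev, hj]; omega)
  rw [Finset.sum_congr rfl (fun j _ => hlo j), Finset.sum_congr rfl (fun j _ => hhi j)]
  rw [← Finset.mul_sum]
  have : ∑ j : Fin (2 ^ k), u j.rev * w j.rev = ∑ j : Fin (2 ^ k), u j * w j := by
    exact Fintype.sum_bijective Fin.rev Fin.rev_bijective _ _ (fun j => rfl)
  rw [this]; ring

lemma dot_prodVec : ∀ (n : ℕ) (c c' : Fin n → Bool),
    dotProduct (prodVec n c) (prodVec n c') = if c = c' then (2:ℝ)^n else 0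
  | 0, c, c' => by
      simp [prodVec, dotProduct, Subsingleton.elim c c']
  | n+1, c, c' => by
      have hrec : dotProduct (prodVec (n+1) c) (prodVec (n+1) c')
          = (sgn (c (Fin.last n)) * sgn (c' (Fin.last n)) + 1) *
            dotProduct (prodVec n fun i => c i.castSucc)
              (prodVec n fun i => c' i.castSucc) := by
        show dotProduct ((Fmat (c (Fin.last n)) n).mulVec _)
            ((Fmat (c' (Fin.last n)) n).mulVec _) = _
        exact dot_step _ _ _ _ _
      rw [hrec, dot_prodVec n]
      have hcc : c = c' ↔ ((fun i : Fin n => c i.castSucc) = fun i : Fin n => c' i.castSucc)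
          ∧ c (Fin.last n) = c' (Fin.last n) := by
        constructor
        · rintro rfl; exact ⟨rfl, rfl⟩
        · rintro ⟨h1, h2⟩
          funext i
          refine Fin.lastCases h2 (fun i => ?_) i
          exact congrFun h1 i
      by_cases hb : c (Fin.last n) = c' (Fin.last n)
      · have h2 : sgn (c (Fin.last n)) * sgn (c' (Fin.last n)) + 1 = 2 := by
          rw [hb]; cases c' (Fin.last n) <;> norm_num [sgn]
        rw [h2]
        by_cases ht : ((fun i : Fin n => c i.castSucc) = fun i : Fin n => c' i.castSucc)
        · rw [if_pos ht, if_pos (hcc.mpr ⟨ht, hb⟩)]; ring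
        · rw [if_neg ht, if_neg (fun h => ht (hcc.mp h).1)]; ring
      · have h0 : sgn (c (Fin.last n)) * sgn (c' (Fin.last n)) + 1 = 0 := by
          revert hb; cases c (Fin.last n) <;> cases c' (Fin.last n) <;> norm_num [sgn]
        rw [h0, if_neg (fun h => hb (hcc.mp h).2)]; ring

lemma dot_sum {ι N : Type*} [Fintype ι] [Fintype N] (u : N → ℝ) (f : ι → N → ℝ) :
    dotProduct u (∑ c, f c) = ∑ c, dotProduct u (f c) := by
  simp only [dotProduct, Finset.sum_apply, Finset.mul_sum]
  exact Finset.sum_comm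

lemma li (n : ℕ) : LinearIndependent ℝ (fun c : Fin n → Bool => prodVec n c) := by
  rw [Fintype.linearIndependent_iff]
  intro g hg c₀
  have h := congrArg (fun x => dotProduct (prodVec n c₀) x) hg
  simp only [dotProduct_zero] at h
  rw [dot_sum] at h
  simp only [dotProduct_smul, smul_eq_mul, dot_prodVec] at h
  rw [Finset.sum_eq_single c₀ (by intro c _ hc; rw [if_neg (Ne.symm hc), mul_zero])
    (by simp)] at h
  simp only [if_pos rfl] at h
  have h2 : (2:ℝ)^n ≠ 0 := by positivity
  rcases mul_eq_zero.mp h with h | h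
  · exact h
  · exact absurd h h2

lemma prodVec_inj (n : ℕ) : Function.Injective (fun c : Fin n → Bool => prodVec n c) :=
  (li n).injective

lemma SA_eq (n : ℕ) : SA n = Set.range (fun c : Fin n → Bool => prodVec n c) := by
  ext v
  exact ⟨fun ⟨c, hc⟩ => ⟨c, hc.symm⟩, fun ⟨c, hc⟩ => ⟨c, hc.symm⟩⟩

/-- key step of Proposition 3: if V is a set of m pairwise distinct
elements of SA(n) and M_V is the m × 2^n matrix whose rows are the transposed
elements of V, then the kernel of x ↦ M_V x equals the linear span of SA(n) \ V
and has dimension 2^n − m. -/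
theorem stmt15 (n : ℕ) (hn : 1 ≤ n) (V : Finset (Fin (2 ^ n) → ℝ)) (m : ℕ)
    (hV : (V : Set (Fin (2 ^ n) → ℝ)) ⊆ SA n) (hm : V.card = m) :
    LinearMap.ker
        (Matrix.of fun (v : {x // x ∈ V}) (j : Fin (2 ^ n)) =>
          (v : Fin (2 ^ n) → ℝ) j).mulVecLin
      = Submodule.span ℝ (SA n \ (V : Set (Fin (2 ^ n) → ℝ))) ∧
    Module.finrank ℝ
        (LinearMap.ker
          (Matrix.of fun (v : {x // x ∈ V}) (j : Fin (2 ^ n)) =>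
            (v : Fin (2 ^ n) → ℝ) j).mulVecLin)
      = 2 ^ n - m := by
  classical
  set M := (Matrix.of fun (v : {x // x ∈ V}) (j : Fin (2 ^ n)) =>
    (v : Fin (2 ^ n) → ℝ) j) with hM
  have hker : ∀ x, x ∈ LinearMap.ker M.mulVecLin ↔
      ∀ v ∈ V, dotProduct v x = 0 := by
    intro x
    rw [LinearMap.mem_ker, Matrix.mulVecLin_apply]
    constructor
    · intro h v hv
      exact congrFun h ⟨v, hv⟩
    · intro h
      funext v
      exact h v.1 v.2
  -- basis
  have hcard : Fintype.card (Fin n → Bool) = Module.finrank ℝ (Fin (2 ^ n) → ℝ) := by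
    simp [Module.finrank_fin_fun]
  let bas : Module.Basis (Fin n → Bool) ℝ (Fin (2 ^ n) → ℝ) :=
    basisOfLinearIndependentOfCardEqFinrank (li n) hcard
  have hbas : ⇑bas = fun c => prodVec n c :=
    coe_basisOfLinearIndependentOfCardEqFinrank _ _
  have hkereq : LinearMap.ker M.mulVecLin
      = Submodule.span ℝ (SA n \ (V : Set (Fin (2 ^ n) → ℝ))) := by
    apply le_antisymm
    · -- ker ≤ span
      intro x hx
      have hrepr : ∑ c : Fin n → Bool, bas.repr x c • prodVec n c = x := by
        conv_rhs => rw [← bas.sum_repr x]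
        simp [hbas]
      have hz : ∀ c : Fin n → Bool, prodVec n c ∈ V → bas.repr x c = 0 := by
        intro c hc
        have h0 : dotProduct (prodVec n c) x = 0 := (hker x).mp hx _ hc
        rw [← hrepr, dot_sum] at h0
        simp only [dotProduct_smul, smul_eq_mul, dot_prodVec] at h0
        rw [Finset.sum_eq_single c (by intro c' _ hc'; rw [if_neg (Ne.symm hc'), mul_zero])
          (by simp)] at h0
        simp only [if_pos rfl] at h0
        have h2 : (2:ℝ)^n ≠ 0 := by positivity
        rcases mul_eq_zero.mp h0 with h | h
        · exact h
        · exact absurd h h2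
      have hx2 : x = ∑ c ∈ Finset.univ.filter (fun c => prodVec n c ∉ V),
          bas.repr x c • prodVec n c := by
        rw [Finset.sum_subset (Finset.subset_univ _), hrepr]
        intro c _ hc
        simp only [Finset.mem_filter, Finset.mem_univ, true_and, not_not] at hc
        rw [hz c hc, zero_smul]
      rw [hx2]
      apply Submodule.sum_mem
      intro c hc
      simp only [Finset.mem_filter, Finset.mem_univ, true_and] at hc
      exact Submodule.smul_mem _ _ (Submodule.subset_span ⟨⟨c, rfl⟩, hc⟩)
    · -- span ≤ ker
      rw [Submodule.span_le]
      rintro w ⟨hwSA, hwV⟩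
      rw [SetLike.mem_coe, hker]
      intro v hv
      obtain ⟨c, rfl⟩ := hwSA
      obtain ⟨c', hc'⟩ := hV hv
      rw [hc', dot_prodVec]
      rw [if_neg]
      intro hcc
      apply hwV
      rw [hcc] at hc'
      rwa [← hc']
  refine ⟨hkereq, ?_⟩
  rw [hkereq]
  -- dimension
  set SAf : Finset (Fin (2 ^ n) → ℝ) :=
    Finset.image (fun c : Fin n → Bool => prodVec n c) Finset.univ with hSAf
  have hco : ((SAf \ V : Finset _) : Set _) = SA n \ (V : Set (Fin (2 ^ n) → ℝ)) := by
    rw [Finset.coe_sdiff, hSAf, Finset.coe_image, Finset.coe_univ, Set.image_univ, ← SA_eq]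
  rw [← hco]
  have hli : LinearIndependent ℝ (fun x : ((SAf \ V : Finset _) : Set (Fin (2 ^ n) → ℝ)) => (x : Fin (2 ^ n) → ℝ)) := by
    apply (((linearIndepOn_id_range_iff (li n).injective).mpr (li n)).mono ?_).linearIndependent
    rw [hco, ← SA_eq]
    exact fun x hx => hx.1
  rw [finrank_span_finset_eq_card hli]
  have hVsub : V ⊆ SAf := by
    intro v hv
    obtain ⟨c, hc⟩ := hV hv
    exact Finset.mem_image.mpr ⟨c, Finset.mem_univ _, hc.symm⟩
  rw [Finset.card_sdiff_of_subset hVsub, hm]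
  congr 1
  rw [hSAf, Finset.card_image_of_injective _ (prodVec_inj n)]
  simp
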